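/- Spectrum of the Hessian for the Lennard-Jones 2-body problem: Let q₀ = ((0, 1/2), (0, −1/2)) ∈ Ω. Then the Hessian ∇²U(q₀), regarded as a symmetric 4×4 real matrix, has spectrum σ(∇²U(q₀)) = {0, 144}, where the eigenvalue 0 has multiplicity 3 and the eigenvalue 144 has multiplicity 1; equivalently, the characteristic polynomial of ∇²U(q₀) is x³(x − 144). -/

import Mathlib

open Polynomial

/-- Configuration space of two point particles in the plane. -/
noncomputable abbrev LJConf2 := PiLp 2 fun _ : Fin 2 => EuclideanSpace ℝ (Fin 2)

/-- The Lennard-Jones two-body potential `U(q₁,q₂) = ‖q₁ − q₂‖⁻¹² − 2‖q₁ − q₂‖⁻⁶`. -/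
noncomputable def lj2 (q : LJConf2) : ℝ := ‖q 0 - q 1‖ ^ (-12 : ℤ) - 2 * ‖q 0 - q 1‖ ^ (-6 : ℤ)

/-- The configuration `q₀ = ((0, 1/2), (0, −1/2))`. -/
noncomputable def ljq₀ : LJConf2 := WithLp.toLp 2 ![WithLp.toLp 2 ![(0 : ℝ), 1/2], WithLp.toLp 2 ![(0 : ℝ), -1/2]]


abbrev E2 := EuclideanSpace ℝ (Fin 2)

instance : ContinuousSMul ℝ LJConf2 := IsBoundedSMul.continuousSMul

/-- the relative position linear map -/
noncomputable def uL : LJConf2 →L[ℝ] E2 :=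
  LinearMap.toContinuousLinearMap
  { toFun := fun q => q 0 - q 1
    map_add' := fun a b => by
      show (a + b) 0 - (a + b) 1 = _
      simp [sub_eq_add_neg]; abel
    map_smul' := fun c a => by
      show (c • a) 0 - (c • a) 1 = c • (a 0 - a 1)
      simp [smul_sub] }

/-- x ↦ (x, -x) -/
noncomputable def aL : E2 →L[ℝ] LJConf2 :=
  LinearMap.toContinuousLinearMap
  { toFun := fun x => (WithLp.toLp 2 ![x, -x] : LJConf2)
    map_add' := fun a b => by
      ext i : 1
      fin_cases i <;> simp <;> abel
    map_smul' := fun c a => by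
      ext i : 1
      fin_cases i <;> simp }

example : uL ljq₀ = WithLp.toLp 2 ![(0:ℝ), 1] := by
  ext j
  show ljq₀ 0 j - ljq₀ 1 j = _
  fin_cases j <;> norm_num [ljq₀]

noncomputable def φLJ (t : ℝ) : ℝ := t ^ (-6 : ℤ) - 2 * t ^ (-3 : ℤ)
noncomputable def ψLJ (t : ℝ) : ℝ := (-6) * t ^ (-7 : ℤ) + 6 * t ^ (-4 : ℤ)

lemma sq_zpow (r : ℝ) (n : ℤ) : (r^2) ^ n = r ^ (2*n) := by
  rw [← zpow_natCast r 2, ← zpow_mul]; norm_num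

lemma lj2_eq (q : LJConf2) : lj2 q = φLJ (‖uL q‖ ^ 2) := by
  have h : uL q = q 0 - q 1 := rfl
  rw [lj2, φLJ, h, sq_zpow, sq_zpow]
  norm_num

lemma hasDerivAt_φLJ {t : ℝ} (ht : t ≠ 0) : HasDerivAt φLJ (ψLJ t) t := by
  have h1 : HasDerivAt (fun t : ℝ => t ^ (-6:ℤ)) ((-6) * t ^ (-7:ℤ)) t := by
    simpa using hasDerivAt_zpow (-6) t (Or.inl ht)
  have h2 : HasDerivAt (fun t : ℝ => t ^ (-3:ℤ)) ((-3) * t ^ (-4:ℤ)) t := by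
    simpa using hasDerivAt_zpow (-3) t (Or.inl ht)
  have := h1.sub ((h2.const_mul (2:ℝ)))
  refine this.congr_deriv ?_
  rw [ψLJ]; ring

open scoped RealInnerProductSpace

lemma inner_aL (x : E2) (v : LJConf2) : ⟪aL x, v⟫ = ⟪x, uL v⟫ := by
  have h0 : aL x 0 = x := rfl
  have h1 : aL x 1 = -x := rfl
  have h2 : uL v = v 0 - v 1 := rfl
  rw [PiLp.inner_apply, Fin.sum_univ_two, h0, h1, h2, inner_sub_right, inner_neg_left]
  ring

noncomputable def GLJ (q : LJConf2) : LJConf2 := (2 * ψLJ (‖uL q‖^2)) • aL (uL q)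

lemma hasGradientAt_lj2 (q : LJConf2) (hq : uL q ≠ 0) : HasGradientAt lj2 (GLJ q) q := by
  have ht : (‖uL q‖^2 : ℝ) ≠ 0 := pow_ne_zero 2 (norm_ne_zero_iff.mpr hq)
  have hn : HasFDerivAt (fun q : LJConf2 => ⟪uL q, uL q⟫)
      ((fderivInnerCLM ℝ (uL q, uL q)).comp ((uL : LJConf2 →L[ℝ] E2).prod uL)) q :=
    uL.hasFDerivAt.inner ℝ uL.hasFDerivAt
  have hφ : HasDerivAt φLJ (ψLJ (‖uL q‖^2)) (⟪uL q, uL q⟫) := by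
    rw [real_inner_self_eq_norm_sq]; exact hasDerivAt_φLJ ht
  have hcomp := hφ.comp_hasFDerivAt q hn
  have hlj : HasFDerivAt lj2
      (ψLJ (‖uL q‖^2) • ((fderivInnerCLM ℝ (uL q, uL q)).comp
        ((uL : LJConf2 →L[ℝ] E2).prod uL))) q := by
    refine hcomp.congr_of_eventuallyEq (Filter.Eventually.of_forall fun p => ?_)
    show lj2 p = φLJ ⟪uL p, uL p⟫
    rw [lj2_eq, real_inner_self_eq_norm_sq]
  rw [hasGradientAt_iff_hasFDerivAt]
  refine hlj.congr_fderiv (Eq.symm ?_)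
  ext v
  show ⟪GLJ q, v⟫ = _
  rw [GLJ, real_inner_smul_left, inner_aL]
  simp only [ContinuousLinearMap.coe_smul', Pi.smul_apply, ContinuousLinearMap.coe_comp',
    Function.comp_apply, ContinuousLinearMap.prod_apply, fderivInnerCLM_apply]
  rw [real_inner_comm (uL v) (uL q)]
  rw [smul_eq_mul]; ring

noncomputable def dLJ : E2 := WithLp.toLp 2 ![0, 1]

lemma uL_ljq₀ : uL ljq₀ = dLJ := by
  ext j
  show ljq₀ 0 j - ljq₀ 1 j = dLJ j
  fin_cases j <;> norm_num [ljq₀, dLJ]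

lemma inner_dLJ_self : ⟪dLJ, dLJ⟫ = 1 := by
  rw [PiLp.inner_apply, Fin.sum_univ_two]
  norm_num [dLJ]

lemma norm_dLJ_sq : ‖dLJ‖ ^ 2 = 1 := by
  rw [← real_inner_self_eq_norm_sq, inner_dLJ_self]

lemma hasDerivAt_ψLJ {t : ℝ} (ht : t ≠ 0) :
    HasDerivAt ψLJ (42 * t ^ (-8:ℤ) - 24 * t ^ (-5:ℤ)) t := by
  have h1 : HasDerivAt (fun t : ℝ => t ^ (-7:ℤ)) ((-7) * t ^ (-8:ℤ)) t := by
    simpa using hasDerivAt_zpow (-7) t (Or.inl ht)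
  have h2 : HasDerivAt (fun t : ℝ => t ^ (-4:ℤ)) ((-4) * t ^ (-5:ℤ)) t := by
    simpa using hasDerivAt_zpow (-4) t (Or.inl ht)
  have := (h1.const_mul (-6:ℝ)).add (h2.const_mul (6:ℝ))
  refine this.congr_deriv ?_
  ring

lemma ψLJ_one : ψLJ 1 = 0 := by norm_num [ψLJ]

noncomputable def DLJ : LJConf2 →L[ℝ] ℝ :=
  (fderivInnerCLM ℝ (dLJ, dLJ)).comp ((uL : LJConf2 →L[ℝ] E2).prod uL)

lemma hasFDerivAt_GLJ :
    HasFDerivAt GLJ ((((36:ℝ) • DLJ)).smulRight (aL dLJ)) ljq₀ := by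
  have hn : HasFDerivAt (fun q : LJConf2 => ⟪uL q, uL q⟫) DLJ ljq₀ := by
    have := uL.hasFDerivAt.inner ℝ (uL.hasFDerivAt (x := ljq₀))
    rwa [uL_ljq₀] at this
  have hψ : HasDerivAt ψLJ 18 (⟪uL ljq₀, uL ljq₀⟫) := by
    rw [uL_ljq₀, inner_dLJ_self]
    have := hasDerivAt_ψLJ (t := 1) one_ne_zero
    norm_num at this
    exact this
  have hc : HasFDerivAt (fun q : LJConf2 => 2 * ψLJ (‖uL q‖^2))
      ((36:ℝ) • DLJ) ljq₀ := by
    have h0 := (hψ.comp_hasFDerivAt ljq₀ hn).const_mul (2:ℝ)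
    have he : (fun q : LJConf2 => 2 * (ψLJ ∘ fun q : LJConf2 => ⟪uL q, uL q⟫) q)
        = fun q : LJConf2 => 2 * ψLJ (‖uL q‖^2) := by
      funext p
      simp only [Function.comp_apply]
      rw [real_inner_self_eq_norm_sq]
    rw [he] at h0
    refine h0.congr_fderiv ?_
    rw [smul_smul]
    norm_num
  have hA : HasFDerivAt (fun q : LJConf2 => aL (uL q))
      ((aL.comp uL : LJConf2 →L[ℝ] LJConf2)) ljq₀ := (aL.comp uL).hasFDerivAt
  have := hc.smul hA
  rw [show (2 * ψLJ (‖uL ljq₀‖^2) : ℝ) = 0 by rw [uL_ljq₀, norm_dLJ_sq, ψLJ_one]; ring] at this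
  rw [uL_ljq₀] at this
  simp only [zero_smul, zero_add] at this
  exact this

lemma DLJ_apply (v : LJConf2) : DLJ v = 2 * ⟪dLJ, uL v⟫ := by
  rw [DLJ]
  simp only [ContinuousLinearMap.coe_comp', Function.comp_apply,
    ContinuousLinearMap.prod_apply, fderivInnerCLM_apply]
  rw [real_inner_comm (uL v) dLJ]
  ring

lemma ljq₀_mem : uL ljq₀ ≠ 0 := by
  rw [uL_ljq₀]
  intro h
  have := congrArg (fun x : E2 => x 1) h
  norm_num [dLJ] at this


/-- The Hessian `∇²U(q₀)` of the Lennard-Jones 2-body potential at `q₀`, as an endomorphism of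
the (4-dimensional) configuration space. -/
noncomputable def ljHess : LJConf2 →ₗ[ℝ] LJConf2 := (fderiv ℝ (gradient lj2) ljq₀ : _)


lemma ljHess_apply (v : LJConf2) : ljHess v = (72 * ⟪dLJ, uL v⟫) • aL dLJ := by
  have hopen : IsOpen {q : LJConf2 | uL q ≠ 0} :=
    isOpen_compl_singleton.preimage uL.continuous
  have hev : gradient lj2 =ᶠ[nhds ljq₀] GLJ := by
    filter_upwards [hopen.mem_nhds ljq₀_mem] with q hq
    exact (hasGradientAt_lj2 q hq).gradient
  have h1 : fderiv ℝ (gradient lj2) ljq₀ = fderiv ℝ GLJ ljq₀ := hev.fderiv_eq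
  have h2 : fderiv ℝ GLJ ljq₀ = ((36:ℝ) • DLJ).smulRight (aL dLJ) :=
    hasFDerivAt_GLJ.fderiv
  show (fderiv ℝ (gradient lj2) ljq₀) v = _
  rw [h1, h2]
  rw [ContinuousLinearMap.smulRight_apply]
  simp only [ContinuousLinearMap.smul_apply, smul_eq_mul]
  rw [DLJ_apply]
  ring_nf

noncomputable def eqvLJ : LJConf2 ≃ₗ[ℝ] (Fin 2 × Fin 2 → ℝ) where
  toFun q ij := q ij.1 ij.2
  invFun f := WithLp.toLp 2 (fun i => WithLp.toLp 2 (fun j => f (i, j)))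
  map_add' _ _ := rfl
  map_smul' _ _ := rfl
  left_inv _ := rfl
  right_inv _ := rfl

noncomputable def bLJ : Module.Basis (Fin 2 × Fin 2) ℝ LJConf2 := Module.Basis.ofEquivFun eqvLJ

-- component formula for the Hessian
lemma ljHess_comp (v : LJConf2) (i j : Fin 2) :
    ljHess v i j = (72 * (v 0 1 - v 1 1)) * (!![0, 1; 0, -1] i j) := by
  have h1 : ⟪dLJ, uL v⟫ = v 0 1 - v 1 1 := by
    have h2 : uL v = v 0 - v 1 := rfl
    rw [PiLp.inner_apply, Fin.sum_univ_two, h2]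
    simp [dLJ]
  rw [ljHess_apply v, h1]
  show (72 * (v 0 1 - v 1 1)) • (aL dLJ i j) = _
  have ha : ∀ (i j : Fin 2), aL dLJ i j = !![0, 1; 0, -1] i j := by
    intro i j
    fin_cases i <;> fin_cases j <;> norm_num [aL, dLJ] <;> rfl
  rw [ha, smul_eq_mul]

noncomputable def MLJ : Matrix (Fin 2 × Fin 2) (Fin 2 × Fin 2) ℝ := LinearMap.toMatrix bLJ bLJ ljHess

lemma MLJ_eq : MLJ = Matrix.of (fun p q : Fin 2 × Fin 2 =>
    (!![0, 1; 0, -1] p.1 p.2) * 72 * (!![0, 1; 0, -1] q.1 q.2)) := by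
  ext p q
  rw [MLJ, LinearMap.toMatrix_apply]
  have hb : bLJ.repr (ljHess (bLJ q)) p = eqvLJ (ljHess (bLJ q)) p := rfl
  rw [hb]
  have he : eqvLJ (ljHess (bLJ q)) p = ljHess (bLJ q) p.1 p.2 := rfl
  rw [he, ljHess_comp]
  have hv : ∀ i j : Fin 2, (bLJ q) i j = if (i, j) = q then 1 else 0 := by
    intro i j
    have hq : (bLJ q : LJConf2) = eqvLJ.symm (Pi.single q 1) := by
      rw [bLJ, Module.Basis.coe_ofEquivFun]
    rw [hq]
    have hs : eqvLJ.symm (Pi.single q 1) i j = Pi.single (M := fun _ : Fin 2 × Fin 2 => ℝ) q 1 (i, j) := rfl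
    rw [hs, Pi.single_apply]
  rw [hv, hv]
  rcases p with ⟨p1, p2⟩
  rcases q with ⟨q1, q2⟩
  fin_cases p1 <;> fin_cases p2 <;> fin_cases q1 <;> fin_cases q2 <;>
    simp [Prod.ext_iff] <;> norm_num

noncomputable def M4 : Matrix (Fin 4) (Fin 4) ℝ :=
  !![0,0,0,0; 0,72,0,-72; 0,0,0,0; 0,-72,0,72]

lemma M4_eq : (Matrix.reindex finProdFinEquiv finProdFinEquiv MLJ : Matrix (Fin 4) (Fin 4) ℝ) = M4 := by
  rw [MLJ_eq]
  ext i j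
  fin_cases i <;> fin_cases j <;>
    simp (config := { decide := true }) [Matrix.reindex_apply, finProdFinEquiv, M4,
      Fin.divNat, Fin.modNat, Matrix.vecHead, Matrix.vecTail] <;>
    norm_num [show ((3 : Fin (2*2)) : ℕ) = 3 from rfl, Fin.mk_one, Matrix.vecHead, Matrix.vecTail]

lemma charmatrix_M4 : M4.charmatrix =
    !![X, 0, 0, 0; 0, X - C 72, 0, C 72; 0, 0, X, 0; 0, C 72, 0, X - C 72] := by
  ext i j
  fin_cases i <;> fin_cases j <;>
    simp [Matrix.charmatrix_apply, M4, Matrix.scalar_apply, Matrix.diagonal_apply,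
      Matrix.vecHead, Matrix.vecTail] <;>
    norm_num [map_neg, map_ofNat]

lemma charpoly_M4 : M4.charpoly = X^3*(X - C 144) := by
  rw [Matrix.charpoly, charmatrix_M4]
  simp [Matrix.det_succ_row_zero, Fin.sum_univ_succ]
  ring_nf
  simp [map_ofNat]
  ring

lemma charpoly_ljHess : LinearMap.charpoly ljHess = X^3*(X - C 144) := by
  rw [← LinearMap.charpoly_toMatrix ljHess bLJ]
  rw [show LinearMap.toMatrix bLJ bLJ ljHess = MLJ from rfl]
  rw [← Matrix.charpoly_reindex finProdFinEquiv MLJ, M4_eq, charpoly_M4]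

lemma inner_dLJ_uL (v : LJConf2) : ⟪dLJ, uL v⟫ = v 0 1 - v 1 1 := by
  have h2 : uL v = v 0 - v 1 := rfl
  rw [PiLp.inner_apply, Fin.sum_univ_two, h2]
  simp [dLJ]

noncomputable def vLJ : LJConf2 := WithLp.toLp 2 ![WithLp.toLp 2 ![1, 0], WithLp.toLp 2 ![0, 0]]

lemma hasEigen0 : Module.End.HasEigenvalue (ljHess : Module.End ℝ LJConf2) 0 := by
  apply Module.End.hasEigenvalue_of_hasEigenvector (x := vLJ)
  constructor
  · rw [Module.End.mem_eigenspace_iff]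
    show ljHess vLJ = _
    rw [ljHess_apply, inner_dLJ_uL]
    norm_num [vLJ]
  · intro h
    have : (1:ℝ) = 0 := by rw [show (1:ℝ) = vLJ 0 0 from rfl, h]; rfl
    norm_num at this

lemma hasEigen144 : Module.End.HasEigenvalue (ljHess : Module.End ℝ LJConf2) 144 := by
  apply Module.End.hasEigenvalue_of_hasEigenvector (x := aL dLJ)
  constructor
  · rw [Module.End.mem_eigenspace_iff]
    show ljHess (aL dLJ) = _
    rw [ljHess_apply, inner_dLJ_uL]
    have h0 : aL dLJ 0 1 = 1 := rfl
    have h1 : aL dLJ 1 1 = -1 := rfl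
    rw [h0, h1]
    norm_num
  · intro h
    have h0 : aL dLJ 0 1 = 1 := rfl
    have : (1:ℝ) = 0 := by rw [← h0, h]; rfl
    norm_num at this


/-- **Spectrum of the Hessian for the Lennard-Jones 2-body problem.**
At `q₀ = ((0,1/2),(0,−1/2))` the Hessian `∇²U(q₀)` has spectrum `{0, 144}`, with eigenvalue `0`
of multiplicity `3` and eigenvalue `144` of multiplicity `1`; equivalently its characteristic
polynomial is `x³(x − 144)`. -/
theorem lennard_jones_two_body_hessian_spectrum :
    spectrum ℝ ljHess = {0, 144} ∧
    LinearMap.charpoly ljHess = X ^ 3 * (X - C 144) ∧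
    (LinearMap.charpoly ljHess).rootMultiplicity 0 = 3 ∧
    (LinearMap.charpoly ljHess).rootMultiplicity 144 = 1 := by
  have hcp := charpoly_ljHess
  have hne : (X ^ 3 * (X - C (144:ℝ)) : ℝ[X]) ≠ 0 := by
    intro h
    have := congrArg (Polynomial.eval 1) h
    norm_num at this
  refine ⟨?_, hcp, ?_, ?_⟩
  · ext μ
    constructor
    · intro hμ
      have hev : Module.End.HasEigenvalue (ljHess : Module.End ℝ LJConf2) μ :=
        Module.End.HasEigenvalue.of_mem_spectrum hμ
      have hroot : (minpoly ℝ (ljHess : Module.End ℝ LJConf2)).IsRoot μ :=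
        Module.End.hasEigenvalue_iff_isRoot.mp hev
      have hdvd : minpoly ℝ (ljHess : Module.End ℝ LJConf2) ∣ LinearMap.charpoly ljHess :=
        LinearMap.minpoly_dvd_charpoly _
      have := hroot.dvd hdvd
      rw [hcp] at this
      have : μ ^ 3 * (μ - 144) = 0 := by
        simpa [Polynomial.IsRoot.def] using this
      rcases mul_eq_zero.mp this with h | h
      · left; exact pow_eq_zero_iff (by norm_num) |>.mp h
      · right
        have h144 : μ = 144 := by linarith
        exact Set.mem_singleton_iff.mpr h144
    · intro hμ
      rcases hμ with h | h
      · rw [h]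
        exact Module.End.hasEigenvalue_iff_mem_spectrum.mp hasEigen0
      · rw [Set.mem_singleton_iff.mp h]
        exact Module.End.hasEigenvalue_iff_mem_spectrum.mp hasEigen144
  · rw [hcp, Polynomial.rootMultiplicity_mul hne]
    have h1 : (X ^ 3 : ℝ[X]) = (X - C 0) ^ 3 := by simp
    rw [h1, Polynomial.rootMultiplicity_X_sub_C_pow,
      Polynomial.rootMultiplicity_eq_zero (by norm_num [Polynomial.IsRoot])]
  · rw [hcp, Polynomial.rootMultiplicity_mul hne]
    rw [Polynomial.rootMultiplicity_eq_zero (by norm_num [Polynomial.IsRoot]),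
      Polynomial.rootMultiplicity_X_sub_C_self]
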